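/- arXiv:0711.3251 — 2 statements merged into one kernel-verified Lean document; each statement's English description precedes it below -/
import Mathlib

section
/- If A and B are N×N positive semidefinite Hermitian matrices, then log det(I + A + B) − log det(I + B) ≤ log det(I + A). -/
open Matrix
open scoped ComplexOrder
open scoped MatrixOrder

section Aux

variable {n : Type*} [Fintype n] [DecidableEq n]

lemma aux_one_le_det_one_add {R : Matrix n n ℂ} (hR : R.PosSemidef) :
    (1 : ℂ) ≤ (1 + R).det := by
  have h := hR.isHermitian
  set U : Matrix n n ℂ := (h.eigenvectorUnitary : Matrix n n ℂ)
  have hU : star U * U = 1 := Matrix.mem_unitaryGroup_iff'.mp h.eigenvectorUnitary.2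
  have hdet : (1 + R).det = ((1 : Matrix n n ℂ) + diagonal (RCLike.ofReal ∘ h.eigenvalues)).det := by
    conv_lhs => rw [h.spectral_theorem, Unitary.conjStarAlgAut_apply]
    rw [mul_assoc, det_one_add_mul_comm, mul_assoc, hU, mul_one]
  rw [hdet]
  have : (1 : Matrix n n ℂ) + diagonal (RCLike.ofReal ∘ h.eigenvalues)
      = diagonal (fun i => 1 + (h.eigenvalues i : ℂ)) := by
    rw [← diagonal_one, diagonal_add]
    rfl
  rw [this, det_diagonal]
  have : ∏ i, (1 + (h.eigenvalues i : ℂ)) = ((∏ i, (1 + h.eigenvalues i) : ℝ) : ℂ) := by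
    push_cast; rfl
  rw [this]
  have h1 : (1:ℝ) ≤ ∏ i, (1 + h.eigenvalues i) := by
    calc (1:ℝ) = ∏ _i : n, (1:ℝ) := by simp
      _ ≤ ∏ i : n, (1 + h.eigenvalues i) :=
        Finset.prod_le_prod (fun i _ => one_pos.le)
          (fun i _ => le_add_of_nonneg_right (hR.eigenvalues_nonneg i))
  exact_mod_cast h1

lemma aux_det_factor {P : Matrix n n ℂ} (hP : P.PosDef) (E : Matrix n n ℂ)
    (hEH : Eᴴ = E) : (P + E * E).det = P.det * (1 + E * P⁻¹ * E).det := by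
  have hPu : IsUnit P.det := hP.det_pos.ne'.isUnit
  have hfac : P * (1 + P⁻¹ * (E * E)) = P + E * E := by
    rw [mul_add, mul_one, ← mul_assoc, mul_nonsing_inv _ hPu, one_mul]
  rw [← hfac, det_mul]
  congr 1
  rw [← mul_assoc, det_one_add_mul_comm, ← mul_assoc]

lemma aux_det_mono {P Q : Matrix n n ℂ} (hP : P.PosDef) (hQP : (Q - P).PosSemidef) :
    P.det ≤ Q.det := by
  set E := CFC.sqrt (Q - P) with hE
  have hEE : E * E = Q - P := CFC.sqrt_mul_sqrt_self _ hQP.nonneg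
  have hEH : Eᴴ = E := (CFC.sqrt_nonneg _).posSemidef.isHermitian
  have hQ : Q = P + E * E := by rw [hEE]; abel
  have hX : (E * P⁻¹ * E).PosSemidef := by
    have := hP.inv.posSemidef.conjTranspose_mul_mul_same E
    rwa [hEH] at this
  calc P.det = P.det * 1 := (mul_one _).symm
    _ ≤ P.det * (1 + E * P⁻¹ * E).det :=
        mul_le_mul_of_nonneg_left (aux_one_le_det_one_add hX) hP.det_pos.le
    _ = Q.det := by rw [hQ, aux_det_factor hP E hEH]

end Aux

theorem logdet_interference_bound (N : ℕ) (A B : Matrix (Fin N) (Fin N) ℂ)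
    (hA : A.PosSemidef) (hB : B.PosSemidef) :
    Real.log ((1 + A + B).det).re - Real.log ((1 + B).det).re ≤
      Real.log ((1 + A).det).re := by
  classical
  set C : Matrix (Fin N) (Fin N) ℂ := 1 + B with hCdef
  have hC : C.PosDef := Matrix.PosDef.one.add_posSemidef hB
  have hCu : IsUnit C.det := hC.det_pos.ne'.isUnit
  set E := CFC.sqrt A with hEdef
  have hEE : E * E = A := CFC.sqrt_mul_sqrt_self _ hA.nonneg
  have hEH : Eᴴ = E := (CFC.sqrt_nonneg _).posSemidef.isHermitian
  have hCi : (C⁻¹).PosDef := hC.inv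
  set T := CFC.sqrt C⁻¹ with hTdef
  have hTT : T * T = C⁻¹ := CFC.sqrt_mul_sqrt_self _ hCi.posSemidef.nonneg
  have hTH : Tᴴ = T := (CFC.sqrt_nonneg _).posSemidef.isHermitian
  have hTu : IsUnit T.det := by
    have h1 : T.det * T.det = (C⁻¹).det := by rw [← det_mul, hTT]
    have h2 : (C⁻¹).det ≠ 0 := hCi.det_pos.ne'
    have h3 : T.det ≠ 0 := by
      intro h0
      rw [h0, mul_zero] at h1
      exact h2 h1.symm
    exact h3.isUnit
  -- T * C * T = 1
  have hTCT : T * C * T = 1 := by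
    have hC2 : C = T⁻¹ * T⁻¹ := by
      rw [← Matrix.mul_inv_rev, hTT, Matrix.nonsing_inv_nonsing_inv C hCu]
    rw [hC2, ← mul_assoc, mul_assoc (T * T⁻¹), mul_nonsing_inv _ hTu,
      one_mul, nonsing_inv_mul _ hTu]
  -- 1 - C⁻¹ is PSD
  have hone_sub : ((1 : Matrix (Fin N) (Fin N) ℂ) - C⁻¹).PosSemidef := by
    have heq : (1 : Matrix (Fin N) (Fin N) ℂ) - C⁻¹ = Tᴴ * B * T := by
      rw [hTH]
      have hBC : B = C - 1 := by rw [hCdef]; abel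
      calc (1 : Matrix (Fin N) (Fin N) ℂ) - C⁻¹ = T * C * T - T * T := by rw [hTCT, hTT]
        _ = T * (C - 1) * T := by noncomm_ring
        _ = T * B * T := by rw [← hBC]
    rw [heq]
    exact hB.conjTranspose_mul_mul_same T
  -- X := E * C⁻¹ * E
  set X := E * C⁻¹ * E with hXdef
  have hX : X.PosSemidef := by
    have := hCi.posSemidef.conjTranspose_mul_mul_same E
    rwa [hEH] at this
  have hAX : (A - X).PosSemidef := by
    have h := hone_sub.conjTranspose_mul_mul_same E
    rw [hEH] at h
    have heq : E * (1 - C⁻¹) * E = A - X := by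
      rw [hXdef, ← hEE]; noncomm_ring
    rwa [heq] at h
  -- determinant factorization
  have key1 : (1 + A + B).det = C.det * ((1 : Matrix (Fin N) (Fin N) ℂ) + X).det := by
    have h1 : (1 : Matrix (Fin N) (Fin N) ℂ) + A + B = C + E * E := by
      rw [hEE, hCdef]; abel
    rw [h1, aux_det_factor hC E hEH]
  -- monotonicity
  have key2 : ((1 : Matrix (Fin N) (Fin N) ℂ) + X).det ≤ (1 + A).det := by
    apply aux_det_mono (Matrix.PosDef.one.add_posSemidef hX)
    have : (1 : Matrix (Fin N) (Fin N) ℂ) + A - (1 + X) = A - X := by abel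
    rw [this]; exact hAX
  have key : (1 + A + B).det ≤ C.det * (1 + A).det := by
    rw [key1]
    exact mul_le_mul_of_nonneg_left key2 hC.det_pos.le
  -- positivity facts
  have ha : (0 : ℂ) < (1 + A + B).det := by
    have : ((1 : Matrix (Fin N) (Fin N) ℂ) + (A + B)).PosDef :=
      Matrix.PosDef.one.add_posSemidef (hA.add hB)
    rw [← add_assoc] at this
    exact this.det_pos
  have hb : (0 : ℂ) < C.det := hC.det_pos
  have hc : (0 : ℂ) < (1 + A).det := (Matrix.PosDef.one.add_posSemidef hA).det_pos
  rw [Complex.lt_def] at ha hb hc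
  -- pass to real parts
  have hkey : ((1 + A + B).det).re ≤ (C.det).re * ((1 + A).det).re := by
    have h1 := (Complex.le_def.mp key).1
    rw [Complex.mul_re, ← hb.2, ← hc.2] at h1
    simpa using h1
  have ha' : 0 < ((1 + A + B).det).re := by simpa using ha.1
  have hb' : 0 < (C.det).re := by simpa using hb.1
  have hc' : 0 < ((1 + A).det).re := by simpa using hc.1
  rw [sub_le_iff_le_add]
  calc Real.log ((1 + A + B).det).re ≤ Real.log ((C.det).re * ((1 + A).det).re) :=
        Real.log_le_log ha' hkey
    _ = Real.log ((1 + A).det).re + Real.log ((1 + B).det).re := by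
        rw [Real.log_mul hb'.ne' hc'.ne', add_comm, hCdef]
end

section
/- Let X₁, …, X_{2^B} be i.i.d. random variables in [0, N] and let D = E[min_i X_i]. If each X_i satisfies P(X_i ≤ x) ≥ C·x^T for all x ∈ [0, x₀] with C·x₀^T ≤ 1, then D ≤ (Γ(1/T)/T)·C^{−1/T}·2^{−B/T} + N·(1 − C·x₀^T)^{2^B}. -/
open MeasureTheory ProbabilityTheory Real

/-- Distortion bound for random quantization codebooks: if `X₁, …, X_{2^B}` are
i.i.d. random variables in `[0, N]` with `P(Xᵢ ≤ x) ≥ C x^T` on `[0, x₀]` and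
`C x₀^T ≤ 1`, then the expected minimum satisfies
`E[minᵢ Xᵢ] ≤ (Γ(1/T)/T) C^{−1/T} 2^{−B/T} + N (1 − C x₀^T)^{2^B}`. -/
theorem random_codebook_distortion_bound (B T N : ℕ) (hB : 1 ≤ B) (hT : 1 ≤ T)
    (hN : 1 ≤ N) (C x₀ : ℝ) (hC : 0 < C) (hx₀ : 0 < x₀) (hx₀N : x₀ ≤ N)
    (hCx₀ : C * x₀ ^ T ≤ 1)
    {Ω : Type} [MeasurableSpace Ω] (μ : Measure Ω) [IsProbabilityMeasure μ]
    (X : Fin (2 ^ B) → Ω → ℝ) (hmeas : ∀ i, Measurable (X i))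
    (hindep : iIndepFun X μ)
    (hident : ∀ i, Measure.map (X i) μ = Measure.map (X 0) μ)
    (hrange : ∀ i, ∀ᵐ ω ∂μ, X i ω ∈ Set.Icc (0 : ℝ) N)
    (hcdf : ∀ i, ∀ x ∈ Set.Icc (0 : ℝ) x₀,
      ENNReal.ofReal (C * x ^ T) ≤ μ {ω | X i ω ≤ x}) :
    (∫ ω, ⨅ i, X i ω ∂μ) ≤
      Real.Gamma (1 / T) / T * C ^ (-(1 / (T : ℝ))) * 2 ^ (-((B : ℝ) / T)) +
        N * (1 - C * x₀ ^ T) ^ (2 ^ B) := by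
  have hT' : (0:ℝ) < (T:ℝ) := by exact_mod_cast hT
  have hN0 : (0:ℝ) ≤ (N:ℝ) := by positivity
  have hm0 : 0 < 2 ^ B := pow_pos (by norm_num) B
  haveI : NeZero (2 ^ B) := ⟨hm0.ne'⟩
  set Y : Ω → ℝ := fun ω => ⨅ i, X i ω with hYdef
  have hYmeas : Measurable Y := Measurable.iInf hmeas
  have hae : ∀ᵐ ω ∂μ, ∀ i, X i ω ∈ Set.Icc (0:ℝ) N := ae_all_iff.mpr hrange
  have hY01 : ∀ᵐ ω ∂μ, Y ω ∈ Set.Icc (0:ℝ) N := by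
    filter_upwards [hae] with ω h
    have hbdd : BddBelow (Set.range fun i => X i ω) := (Set.finite_range _).bddBelow
    refine ⟨le_ciInf fun i => (h i).1, le_trans (ciInf_le hbdd 0) (h 0).2⟩
  have hYnn : 0 ≤ᵐ[μ] Y := by filter_upwards [hY01] with ω h using h.1
  have hYint : Integrable Y μ := by
    refine Integrable.mono' (integrable_const (N:ℝ)) hYmeas.aestronglyMeasurable ?_
    filter_upwards [hY01] with ω h
    rw [Real.norm_eq_abs, abs_le]
    exact ⟨by linarith [h.1, h.2], h.2⟩
  set F : ℝ → ENNReal := fun t => μ ((X 0) ⁻¹' Set.Ioi t) with hF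
  have key : ∀ t, μ {a | t < Y a} = (F t) ^ (2 ^ B) := by
    intro t
    have hset : {a | t < Y a} = ⋂ i, (X i) ⁻¹' Set.Ioi t := by
      ext ω
      simp only [Set.mem_setOf_eq, Set.mem_iInter, Set.mem_preimage, Set.mem_Ioi, hYdef]
      rw [← Finset.inf'_univ_eq_ciInf, Finset.lt_inf'_iff]
      simp
    rw [hset, hindep.meas_iInter (fun i => ⟨Set.Ioi t, measurableSet_Ioi, rfl⟩)]
    have hident' : ∀ i : Fin (2 ^ B), μ ((X i)⁻¹' Set.Ioi t) = F t := by
      intro i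
      rw [hF, ← Measure.map_apply (hmeas i) measurableSet_Ioi, hident i,
        Measure.map_apply (hmeas 0) measurableSet_Ioi]
    simp_rw [hident']
    simp [Finset.prod_const]
  set g : ℝ → ℝ := fun t => (μ {a | t < Y a}).toReal with hg
  have hg_eq : ∀ t, g t = (F t).toReal ^ (2 ^ B) := by
    intro t; rw [hg]; simp only [key t, ENNReal.toReal_pow]
  have hFle : ∀ t, t ∈ Set.Icc (0:ℝ) x₀ → (F t).toReal ≤ 1 - C * t ^ T := by
    intro t ht
    have hcompl : (X 0) ⁻¹' Set.Ioi t = {ω | X 0 ω ≤ t}ᶜ := by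
      ext ω; simp [not_le]
    have hmI : MeasurableSet {ω | X 0 ω ≤ t} := hmeas 0 measurableSet_Iic
    have h2 : ENNReal.ofReal (C * t ^ T) ≤ μ {ω | X 0 ω ≤ t} := hcdf 0 t ht
    have h3 : F t ≤ 1 - ENNReal.ofReal (C * t ^ T) := by
      rw [hF]; simp only []
      rw [hcompl, prob_compl_eq_one_sub hmI]
      exact tsub_le_tsub_left h2 1
    have h4 : (1 - ENNReal.ofReal (C * t ^ T)).toReal = 1 - C * t ^ T := by
      rw [ENNReal.toReal_sub_of_le (le_trans h2 prob_le_one) ENNReal.one_ne_top,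
        ENNReal.toReal_one, ENNReal.toReal_ofReal (mul_nonneg hC.le (pow_nonneg ht.1 T))]
    calc (F t).toReal ≤ (1 - ENNReal.ofReal (C * t ^ T)).toReal :=
          ENNReal.toReal_mono (by simp [ENNReal.sub_ne_top]) h3
      _ = 1 - C * t ^ T := h4
  have hg_anti : Antitone g := fun s t hst =>
    ENNReal.toReal_mono (measure_ne_top μ _)
      (measure_mono fun ω hω => lt_of_le_of_lt hst hω)
  have hgmeas : Measurable g := hg_anti.measurable
  have hg_nonneg : ∀ t, 0 ≤ g t := fun t => ENNReal.toReal_nonneg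
  have hg_le_one : ∀ t, g t ≤ 1 := fun t => by
    rw [← ENNReal.toReal_one]; exact ENNReal.toReal_mono ENNReal.one_ne_top prob_le_one
  have hgN : ∀ t, (N:ℝ) < t → g t = 0 := by
    intro t ht
    have h0 : μ {ω | (N:ℝ) < Y ω} = 0 := by
      have h := hY01.mono fun ω h => h.2
      have h2 := ae_iff.mp h
      simpa [not_le] using h2
    have : μ {a | t < Y a} = 0 :=
      measure_mono_null (fun ω hω => lt_of_le_of_lt ht.le hω) h0
    rw [hg]; simp [this]
  have hIocN : IntegrableOn g (Set.Ioc 0 (N:ℝ)) := by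
    apply Measure.integrableOn_of_bounded measure_Ioc_lt_top.ne hgmeas.aestronglyMeasurable
    refine ae_of_all _ fun t => ?_
    rw [Real.norm_eq_abs, abs_of_nonneg (hg_nonneg t)]
    exact hg_le_one t
  have hIoiN : IntegrableOn g (Set.Ioi (N:ℝ)) :=
    (integrableOn_zero).congr_fun (fun t ht => (hgN t ht).symm) measurableSet_Ioi
  have hg_int : IntegrableOn g (Set.Ioi (0:ℝ)) := by
    rw [← Set.Ioc_union_Ioi_eq_Ioi hN0]
    exact hIocN.union hIoiN
  set b : ℝ := ((2 ^ B : ℕ):ℝ) * C with hb'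
  have hmR : (0:ℝ) < ((2 ^ B : ℕ):ℝ) := by exact_mod_cast hm0
  have hb : 0 < b := mul_pos hmR hC
  have hE_int : IntegrableOn (fun t => Real.exp (-b * t ^ (T:ℝ))) (Set.Ioi (0:ℝ)) := by
    have h := integrableOn_rpow_mul_exp_neg_mul_rpow (p := (T:ℝ)) (s := 0)
      (by norm_num) (by exact_mod_cast hT) hb
    exact h.congr_fun (fun t ht => by simp only [Real.rpow_zero, one_mul]) measurableSet_Ioi
  have hpt : ∀ t ∈ Set.Ioc (0:ℝ) x₀, g t ≤ Real.exp (-b * t ^ (T:ℝ)) := by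
    intro t ht
    have ht0 : 0 ≤ t := ht.1.le
    have h1 : (F t).toReal ≤ 1 - C * t ^ T := hFle t ⟨ht0, ht.2⟩
    have h1' : 1 - C * t ^ T ≤ Real.exp (-(C * t ^ T)) := by
      linarith [Real.add_one_le_exp (-(C * t ^ T))]
    calc g t = (F t).toReal ^ (2 ^ B) := hg_eq t
      _ ≤ Real.exp (-(C * t ^ T)) ^ (2 ^ B) :=
          pow_le_pow_left₀ ENNReal.toReal_nonneg (h1.trans h1') (2 ^ B)
      _ = Real.exp (-b * t ^ (T:ℝ)) := by
          rw [← Real.exp_nat_mul, Real.rpow_natCast]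
          congr 1; rw [hb']; ring
  have hx₀N' : x₀ ≤ (N:ℝ) := hx₀N
  have hsub : 0 ≤ 1 - C * x₀ ^ T := by linarith
  have hsplit1 : ∫ t in Set.Ioi (0:ℝ), g t =
      (∫ t in Set.Ioc 0 x₀, g t) + ∫ t in Set.Ioi x₀, g t := by
    rw [← setIntegral_union (Set.Ioc_disjoint_Ioi le_rfl) measurableSet_Ioi
      (hg_int.mono_set Set.Ioc_subset_Ioi_self)
      (hg_int.mono_set (Set.Ioi_subset_Ioi hx₀.le)),
      Set.Ioc_union_Ioi_eq_Ioi hx₀.le]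
  have hsplit2 : ∫ t in Set.Ioi x₀, g t =
      (∫ t in Set.Ioc x₀ (N:ℝ), g t) + ∫ t in Set.Ioi (N:ℝ), g t := by
    rw [← setIntegral_union (Set.Ioc_disjoint_Ioi le_rfl) measurableSet_Ioi
      (hg_int.mono_set (fun t ht => lt_of_lt_of_le hx₀ ht.1.le))
      (hg_int.mono_set (Set.Ioi_subset_Ioi hN0)),
      Set.Ioc_union_Ioi_eq_Ioi hx₀N']
  have hzero : ∫ t in Set.Ioi (N:ℝ), g t = 0 := by
    rw [setIntegral_congr_fun measurableSet_Ioi (fun t ht => hgN t ht)]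
    simp
  have hb1 : ∫ t in Set.Ioc 0 x₀, g t ≤
      ∫ t in Set.Ioi (0:ℝ), Real.exp (-b * t ^ (T:ℝ)) := by
    calc ∫ t in Set.Ioc 0 x₀, g t
        ≤ ∫ t in Set.Ioc 0 x₀, Real.exp (-b * t ^ (T:ℝ)) :=
          setIntegral_mono_on (hg_int.mono_set Set.Ioc_subset_Ioi_self)
            (hE_int.mono_set Set.Ioc_subset_Ioi_self) measurableSet_Ioc hpt
      _ ≤ _ := setIntegral_mono_set hE_int
            (ae_of_all _ fun t => (Real.exp_pos _).le)
            (HasSubset.Subset.eventuallyLE Set.Ioc_subset_Ioi_self)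
  have hval : ∫ t in Set.Ioi (0:ℝ), Real.exp (-b * t ^ (T:ℝ)) =
      Real.Gamma (1 / T) / T * C ^ (-(1 / (T : ℝ))) * 2 ^ (-((B : ℝ) / T)) := by
    rw [integral_exp_neg_mul_rpow hT' hb]
    rw [Real.Gamma_add_one (one_div_ne_zero hT'.ne')]
    have hm2 : ((2 ^ B : ℕ):ℝ) = (2:ℝ) ^ B := by push_cast; ring
    rw [hb', hm2, Real.mul_rpow (by positivity) hC.le,
      ← Real.rpow_natCast (2:ℝ) B, ← Real.rpow_mul (by norm_num : (0:ℝ) ≤ 2),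
      show (B:ℝ) * (-1 / (T:ℝ)) = -((B:ℝ) / T) by ring,
      show (-1 / (T:ℝ)) = -(1 / (T:ℝ)) by ring]
    ring
  have hb2 : ∫ t in Set.Ioc x₀ (N:ℝ), g t ≤ (N:ℝ) * (1 - C * x₀ ^ T) ^ (2 ^ B) := by
    have hgx₀ : ∀ t ∈ Set.Ioc x₀ (N:ℝ), g t ≤ (1 - C * x₀ ^ T) ^ (2 ^ B) := by
      intro t ht
      calc g t ≤ g x₀ := hg_anti ht.1.le
        _ = (F x₀).toReal ^ (2 ^ B) := hg_eq x₀
        _ ≤ (1 - C * x₀ ^ T) ^ (2 ^ B) :=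
            pow_le_pow_left₀ ENNReal.toReal_nonneg (hFle x₀ ⟨hx₀.le, le_rfl⟩) (2 ^ B)
    have hnn : 0 ≤ (1 - C * x₀ ^ T) ^ (2 ^ B) := pow_nonneg hsub (2 ^ B)
    calc ∫ t in Set.Ioc x₀ (N:ℝ), g t
        ≤ ∫ _t in Set.Ioc x₀ (N:ℝ), (1 - C * x₀ ^ T) ^ (2 ^ B) :=
          setIntegral_mono_on
            (hg_int.mono_set (fun t ht => lt_of_lt_of_le hx₀ ht.1.le))
            (integrableOn_const measure_Ioc_lt_top.ne)
            measurableSet_Ioc hgx₀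
      _ = ((N:ℝ) - x₀) * (1 - C * x₀ ^ T) ^ (2 ^ B) := by
          rw [setIntegral_const, Real.volume_real_Ioc_of_le (by linarith),
            smul_eq_mul]
      _ ≤ (N:ℝ) * (1 - C * x₀ ^ T) ^ (2 ^ B) := by
          apply mul_le_mul_of_nonneg_right (by linarith) hnn
  have hLC : (∫ ω, Y ω ∂μ) = ∫ t in Set.Ioi (0:ℝ), g t :=
    hYint.integral_eq_integral_meas_lt hYnn
  calc (∫ ω, ⨅ i, X i ω ∂μ) = ∫ t in Set.Ioi (0:ℝ), g t := hLC
    _ = (∫ t in Set.Ioc 0 x₀, g t) + ((∫ t in Set.Ioc x₀ (N:ℝ), g t) + 0) := by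
        rw [hsplit1, hsplit2, hzero]
    _ ≤ Real.Gamma (1 / T) / T * C ^ (-(1 / (T : ℝ))) * 2 ^ (-((B : ℝ) / T)) +
        N * (1 - C * x₀ ^ T) ^ (2 ^ B) := by
        rw [add_zero]
        exact add_le_add (hval ▸ hb1) hb2
end
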